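/- arXiv:1004.3619 — 3 statements merged into one kernel-verified Lean document; each statement's English description precedes it below -/
import Mathlib

section
/- Let p be a prime, let G be a residually p group, and let H be a retract of G, i.e. there exists a homomorphism φ : G → G with φ(G) ≤ H and φ(h) = h for all h ∈ H. Then the lower central p-filtration of G separates H: the intersection over all n ≥ 1 of the subgroups γᵖ_n(G)·H equals H (here γᵖ_n(G)·H = γᵖ_n(G) ⊔ H is a subgroup since γᵖ_n(G) is normal in G). -/
/-- The subgroup generated by the `p`-th powers of the elements of `K`. -/
def subgroupPPow {G : Type*} [Group G] (K : Subgroup G) (p : ℕ) : Subgroup G :=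
  Subgroup.closure ((fun x => x ^ p) '' (K : Set G))

/-- The lower central `p`-filtration of a subgroup `K` (as subgroups of the ambient
group), indexed so that `gammaP p K (n-1)` is `γᵖ_n(K)`:
`γᵖ_1(K) = K` and `γᵖ_{n+1}(K) = [K, γᵖ_n(K)]·(γᵖ_n(K))ᵖ`. -/
def gammaP (p : ℕ) {G : Type*} [Group G] (K : Subgroup G) : ℕ → Subgroup G
  | 0 => K
  | n + 1 => ⁅K, gammaP p K n⁆ ⊔ subgroupPPow (gammaP p K n) p

/-- A group `G` is residually `p` if every nontrivial element avoids some normal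
subgroup of `p`-power index. -/
def IsResiduallyP (p : ℕ) (G : Type*) [Group G] : Prop :=
  ∀ g : G, g ≠ 1 → ∃ N : Subgroup G, N.Normal ∧ (∃ k : ℕ, N.index = p ^ k) ∧ g ∉ N

section Aux

variable {G : Type*} {G' : Type*} [Group G] [Group G']

lemma subgroupPPow_mono {K K' : Subgroup G} (h : K ≤ K') (p : ℕ) :
    subgroupPPow K p ≤ subgroupPPow K' p :=
  Subgroup.closure_mono (Set.image_mono h)

lemma map_subgroupPPow (f : G →* G') (K : Subgroup G) (p : ℕ) :
    (subgroupPPow K p).map f = subgroupPPow (K.map f) p := by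
  unfold subgroupPPow
  rw [MonoidHom.map_closure]
  congr 1
  rw [Subgroup.coe_map, Set.image_image, Set.image_image]
  simp [map_pow]

lemma gammaP_map (f : G →* G') (p : ℕ) (K : Subgroup G) (n : ℕ) :
    (gammaP p K n).map f = gammaP p (K.map f) n := by
  induction n with
  | zero => rfl
  | succ n ih =>
      show ((⁅K, gammaP p K n⁆ ⊔ subgroupPPow (gammaP p K n) p).map f) = _
      rw [Subgroup.map_sup, Subgroup.map_commutator, map_subgroupPPow, ih]
      rfl

lemma gammaP_mono {K K' : Subgroup G} (h : K ≤ K') (p : ℕ) (n : ℕ) :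
    gammaP p K n ≤ gammaP p K' n := by
  induction n with
  | zero => exact h
  | succ n ih =>
      exact sup_le_sup (Subgroup.commutator_mono h ih) (subgroupPPow_mono ih p)

lemma map_conj_eq_self {K : Subgroup G} (hK : K.Normal) (g : G) :
    K.map (MulAut.conj g).toMonoidHom = K := by
  apply le_antisymm
  · rintro _ ⟨x, hx, rfl⟩
    exact hK.conj_mem x hx g
  · intro x hx
    exact ⟨g⁻¹ * x * g, by simpa using hK.conj_mem x hx g⁻¹,
      by simp [mul_assoc]⟩

lemma subgroupPPow_normal {K : Subgroup G} (hK : K.Normal) (p : ℕ) :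
    (subgroupPPow K p).Normal := by
  constructor
  intro n hn g
  have : (subgroupPPow K p).map (MulAut.conj g).toMonoidHom = subgroupPPow K p := by
    rw [map_subgroupPPow, map_conj_eq_self hK]
  rw [← this]
  exact ⟨n, hn, rfl⟩

lemma gammaP_top_normal (p : ℕ) (n : ℕ) : (gammaP p (⊤ : Subgroup G) n).Normal := by
  induction n with
  | zero => exact ⟨fun n _ g => Subgroup.mem_top _⟩
  | succ n ih =>
      haveI := ih
      haveI : (⁅(⊤ : Subgroup G), gammaP p ⊤ n⁆).Normal := Subgroup.commutator_normal ⊤ _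
      haveI := subgroupPPow_normal ih p
      exact Subgroup.sup_normal _ _

/-- In a finite `p`-group, the lower central `p`-filtration reaches the trivial
subgroup. -/
lemma pgroup_exists_gammaP_eq_bot (p : ℕ) (hp : p.Prime) :
    ∀ (c : ℕ) (Q : Type*) [Group Q] [Finite Q], Nat.card Q ≤ c → IsPGroup p Q →
      ∃ n, gammaP p (⊤ : Subgroup Q) n = ⊥ := by
  intro c
  induction c with
  | zero =>
      intro Q _ _ hc _
      exact absurd hc (by simpa using Nat.card_pos.ne')
  | succ c ih =>
      intro Q _ _ hc hP
      by_cases hQ : Subsingleton Q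
      · refine ⟨0, ?_⟩
        apply eq_bot_iff.mpr
        intro x _
        simpa [Subgroup.mem_bot] using Subsingleton.elim x 1
      · haveI : Nontrivial Q := not_subsingleton_iff_nontrivial.mp hQ
        classical
        haveI : Fact p.Prime := ⟨hp⟩
        -- find a central element `z ≠ 1` with `z ^ p = 1`
        haveI := hP.center_nontrivial
        obtain ⟨z₀, hz₀⟩ := exists_ne (1 : Subgroup.center Q)
        have hz₀Q : (z₀ : Q) ≠ 1 := fun h => hz₀ (Subtype.ext h)
        have hex : ∃ k : ℕ, (z₀ : Q) ^ p ^ k = 1 := hP (z₀ : Q)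
        set k : ℕ := Nat.find hex with hkdef
        have hk : (z₀ : Q) ^ p ^ k = 1 := Nat.find_spec hex
        have hk1 : k ≠ 0 := by
          rintro h
          rw [h, pow_zero, pow_one] at hk
          exact hz₀Q hk
        set z : Q := (z₀ : Q) ^ (p ^ (k - 1)) with hzdef
        have hzbot : z ≠ 1 := by
          have := Nat.find_min hex (m := k - 1) (by omega)
          simpa [hzdef] using this
        have hzp : z ^ p = 1 := by
          rw [hzdef, ← pow_mul, ← pow_succ, Nat.sub_add_cancel (Nat.one_le_iff_ne_zero.mpr hk1)]
          exact hk
        have hzc : z ∈ Subgroup.center Q := by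
          rw [hzdef]
          exact pow_mem z₀.2 _
        set Z : Subgroup Q := Subgroup.zpowers z with hZdef
        have hZc : Z ≤ Subgroup.center Q := Subgroup.zpowers_le.mpr hzc
        haveI hZn : Z.Normal := by
          constructor
          intro n hn g
          have := (Subgroup.mem_center_iff.mp (hZc hn) g).symm
          rw [← this, mul_assoc, mul_inv_cancel, mul_one]
          exact hn
        have hzZp : ∀ x ∈ Z, x ^ p = 1 := by
          rintro x ⟨m, rfl⟩
          rw [← zpow_natCast, ← zpow_mul, mul_comm, zpow_mul, zpow_natCast, hzp, one_zpow]
        -- the quotient is a smaller p-group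
        have hcardZ : 2 ≤ Nat.card Z := by
          haveI : Nontrivial Z := ⟨⟨⟨z, Subgroup.mem_zpowers z⟩, 1, fun h =>
            hzbot (by simpa using congrArg Subtype.val h)⟩⟩
          exact Finite.one_lt_card
        have hcardQ : Nat.card Q = Nat.card (Q ⧸ Z) * Nat.card Z :=
          Subgroup.card_eq_card_quotient_mul_card_subgroup Z
        have hqpos : 0 < Nat.card (Q ⧸ Z) := Nat.card_pos
        have hlt : Nat.card (Q ⧸ Z) ≤ c := by
          nlinarith [hc, hcardZ, hqpos, hcardQ]
        obtain ⟨n, hn⟩ := ih (Q ⧸ Z) hlt (hP.to_quotient Z)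
        have hle : gammaP p (⊤ : Subgroup Q) n ≤ Z := by
          rw [← QuotientGroup.ker_mk' Z, ← Subgroup.map_eq_bot_iff,
            gammaP_map, Subgroup.map_top_of_surjective _ (QuotientGroup.mk'_surjective Z)]
          exact hn
        refine ⟨n + 1, le_bot_iff.mp ?_⟩
        show ⁅(⊤ : Subgroup Q), gammaP p ⊤ n⁆ ⊔ subgroupPPow (gammaP p ⊤ n) p ≤ ⊥
        apply sup_le
        · refine (Subgroup.commutator_mono le_rfl hle).trans ?_
          rw [Subgroup.commutator_le]
          intro g₁ _ g₂ hg₂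
          rw [Subgroup.mem_bot, commutatorElement_eq_one_iff_commute]
          exact (Subgroup.mem_center_iff.mp (hZc hg₂) g₁ : Commute g₁ g₂)
        · refine (subgroupPPow_mono hle p).trans ?_
          apply (Subgroup.closure_le _).mpr
          rintro _ ⟨x, hx, rfl⟩
          rw [SetLike.mem_coe, Subgroup.mem_bot]
          exact hzZp x hx

end Aux

/-- If `G` is residually `p` and `H` is a retract of `G`, then the lower central
`p`-filtration of `G` separates `H`: `⋂_{n ≥ 1} γᵖ_n(G)·H = H`. -/
theorem lowerCentralPSeries_separates_retract {G : Type*} [Group G] (p : ℕ)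
    (hp : p.Prime) (hres : IsResiduallyP p G) (H : Subgroup G) (φ : G →* G)
    (hrange : φ.range ≤ H) (hid : ∀ h ∈ H, φ h = h) :
    (⨅ n : ℕ, gammaP p (⊤ : Subgroup G) n ⊔ H) = H := by
  apply le_antisymm
  · intro g hg
    simp only [Subgroup.mem_iInf] at hg
    -- the element x := g * (φ g)⁻¹ lies in every gammaP
    have hx : ∀ n : ℕ, g * (φ g)⁻¹ ∈ gammaP p (⊤ : Subgroup G) n := by
      intro n
      haveI := gammaP_top_normal (G := G) p n
      have := hg n
      rw [← SetLike.mem_coe, Subgroup.normal_mul] at this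
      obtain ⟨c, hc, h, hh, rfl⟩ := this
      have hφc : φ c ∈ gammaP p (⊤ : Subgroup G) n := by
        have h1 : φ c ∈ (gammaP p (⊤ : Subgroup G) n).map φ := ⟨c, hc, rfl⟩
        have h2 : (gammaP p (⊤ : Subgroup G) n).map φ ≤ gammaP p (⊤ : Subgroup G) n := by
          rw [gammaP_map]
          exact gammaP_mono le_top p n
        exact h2 h1
      have : c * h * (φ (c * h))⁻¹ = c * (φ c)⁻¹ := by
        rw [map_mul, hid h hh, mul_inv_rev, ← mul_assoc, mul_assoc c h h⁻¹,
          mul_inv_cancel, mul_one]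
      rw [this]
      exact mul_mem hc (inv_mem hφc)
    -- x = 1 by residual p-ness
    have hx1 : g * (φ g)⁻¹ = 1 := by
      by_contra hne
      obtain ⟨N, hNnorm, ⟨k, hk⟩, hxN⟩ := hres _ hne
      haveI := hNnorm
      have hcard : Nat.card (G ⧸ N) = p ^ k := hk
      haveI : Finite (G ⧸ N) :=
        Nat.finite_of_card_ne_zero (by rw [hcard]; exact pow_ne_zero _ hp.pos.ne')
      haveI : Fact p.Prime := ⟨hp⟩
      have hPg : IsPGroup p (G ⧸ N) := IsPGroup.of_card hcard
      obtain ⟨n, hn⟩ := pgroup_exists_gammaP_eq_bot p hp (Nat.card (G ⧸ N)) (G ⧸ N)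
        le_rfl hPg
      have hle : gammaP p (⊤ : Subgroup G) n ≤ N := by
        rw [← QuotientGroup.ker_mk' N, ← Subgroup.map_eq_bot_iff,
          gammaP_map, Subgroup.map_top_of_surjective _ (QuotientGroup.mk'_surjective N)]
        exact hn
      exact hxN (hle (hx n))
    have : g = φ g := by
      rw [← mul_inv_eq_one]
      exact hx1
    rw [this]
    exact hrange ⟨g, rfl⟩
  · exact le_iInf fun n => le_sup_right
end

section
/- Let p be a prime, d ≥ 1, and let R be a nonzero commutative ring of characteristic p^d. Let n ≥ 1 with p ≥ n. Then: (i) every upper unitriangular n×n matrix M over R (i.e. M_{jj} = 1 for all j and M_{jk} = 0 for j > k) satisfies M^(p^d) = I, so the group UT₁(n, R) of upper unitriangular matrices has exponent dividing p^d. (ii) If N is a strictly upper triangular n×n matrix over R (N_{jk} = 0 for j ≥ k) and there is k with 1 ≤ k ≤ n−1 such that all entries of the codiagonals of N of index < k vanish (i.e. N_{j, j+l} = 0 for all l < k and all j) while some entry N_{j, j+k} of the k-th codiagonal is a unit of R, then the matrix M = I + N has multiplicative order exactly p^d. -/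
section aux

variable {R : Type*} [CommRing R] {n : ℕ}

lemma codiag_mul {a b : ℕ} {N M : Matrix (Fin n) (Fin n) R}
    (hN : ∀ j j' : Fin n, (j' : ℕ) < (j : ℕ) + a → N j j' = 0)
    (hM : ∀ j j' : Fin n, (j' : ℕ) < (j : ℕ) + b → M j j' = 0) :
    ∀ j j' : Fin n, (j' : ℕ) < (j : ℕ) + (a + b) → (N * M) j j' = 0 := by
  intro j j' h
  rw [Matrix.mul_apply]
  apply Finset.sum_eq_zero
  intro i _
  by_cases hi : (i : ℕ) < (j : ℕ) + a
  · rw [hN j i hi, zero_mul]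
  · rw [hM i j' (by omega), mul_zero]

lemma codiag_pow {a : ℕ} {N : Matrix (Fin n) (Fin n) R}
    (hN : ∀ j j' : Fin n, (j' : ℕ) < (j : ℕ) + a → N j j' = 0) (i : ℕ) :
    ∀ j j' : Fin n, (j' : ℕ) < (j : ℕ) + i * a → (N ^ i) j j' = 0 := by
  induction i with
  | zero =>
    intro j j' h
    simp only [Nat.zero_mul, add_zero] at h
    rw [pow_zero, Matrix.one_apply_ne (Fin.ne_of_val_ne (Nat.ne_of_gt h))]
  | succ i ih =>
    intro j j' h
    rw [Nat.succ_mul] at h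
    rw [pow_succ]
    exact codiag_mul ih hN j j' h

lemma codiag_pow_eq_zero {a : ℕ} {N : Matrix (Fin n) (Fin n) R} (ha : 1 ≤ a)
    (hN : ∀ j j' : Fin n, (j' : ℕ) < (j : ℕ) + a → N j j' = 0) {i : ℕ} (hi : n ≤ i) :
    N ^ i = 0 := by
  ext j j'
  rw [Matrix.zero_apply]
  apply codiag_pow hN i j j'
  have h1 : (j' : ℕ) < n := j'.isLt
  have h2 : i ≤ i * a := Nat.le_mul_of_pos_right i ha
  omega

/-- The binomial expansion of `(1 + N) ^ m` as a sum of smul's. -/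
lemma one_add_pow (N : Matrix (Fin n) (Fin n) R) (m : ℕ) :
    (1 + N) ^ m = ∑ i ∈ Finset.range (m + 1), m.choose i • N ^ i := by
  rw [add_comm, (Commute.one_right N).add_pow]
  refine Finset.sum_congr rfl fun i _ => ?_
  rw [one_pow, mul_one, ← Nat.cast_commute (m.choose i) (N ^ i) |>.eq, ← nsmul_eq_mul]

end aux

section aux2

variable {R : Type*} [CommRing R] {n : ℕ}

lemma key_pow_eq_one (p d : ℕ) (hp : p.Prime) (hd : 1 ≤ d) [CharP R (p ^ d)]
    (hnp : n ≤ p) (N : Matrix (Fin n) (Fin n) R)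
    (hN : ∀ j j' : Fin n, (j' : ℕ) < (j : ℕ) + 1 → N j j' = 0) :
    (1 + N) ^ p ^ d = 1 := by
  rw [one_add_pow]
  rw [Finset.sum_eq_single 0]
  · simp
  · intro i _ hi
    by_cases hin : n ≤ i
    · rw [codiag_pow_eq_zero le_rfl hN hin, smul_zero]
    · push_neg at hin
      have hip : i ≤ p ^ d := le_trans (le_of_lt (lt_of_lt_of_le hin hnp))
        (Nat.le_self_pow (by omega) p)
      have hdvd : p ^ d ∣ (p ^ d).choose i := by
        apply pow_dvd_of_le_emultiplicity
        rw [Nat.Prime.emultiplicity_choose_prime_pow hp hip hi]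
        have h0 : multiplicity p i = 0 := multiplicity_eq_zero.mpr fun h =>
          absurd (Nat.le_of_dvd (Nat.pos_of_ne_zero hi) h) (by omega)
        simp [h0]
      rw [← Nat.cast_smul_eq_nsmul R, (CharP.cast_eq_zero_iff R (p ^ d) _).mpr hdvd, zero_smul]
  · intro h
    simp at h

lemma entry_eval (N : Matrix (Fin n) (Fin n) R) (k : ℕ) (hk : 1 ≤ k)
    (hN : ∀ j j' : Fin n, (j' : ℕ) < (j : ℕ) + k → N j j' = 0)
    (j j' : Fin n) (hj' : (j' : ℕ) = (j : ℕ) + k) (m : ℕ) (hm : 1 ≤ m) :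
    ((1 + N) ^ m) j j' = m • N j j' := by
  rw [one_add_pow, Matrix.sum_apply]
  rw [Finset.sum_eq_single 1]
  · simp
  · intro i _ hi
    rcases Nat.eq_zero_or_pos i with rfl | hipos
    · have hne : j ≠ j' := Fin.ne_of_val_ne (by omega)
      simp [Matrix.one_apply_ne hne]
    · have h2 : 2 ≤ i := by omega
      rw [Matrix.smul_apply, codiag_pow hN i j j' (by nlinarith), smul_zero]
  · intro h
    simp at h
    omega

end aux2

/-- Let `R` be a nonzero commutative ring of characteristic `p^d` (`p` prime,
`d ≥ 1`) and `1 ≤ n ≤ p`. Then (i) every upper unitriangular `n × n` matrix over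
`R` satisfies `M^(p^d) = 1`, so `UT₁(n, R)` has exponent dividing `p^d`; and
(ii) if `N` is a strictly upper triangular matrix all of whose codiagonals of
index `< k` vanish (for some `1 ≤ k ≤ n - 1`) while some entry of the `k`-th
codiagonal is a unit, then `1 + N` has multiplicative order exactly `p^d`. -/
theorem unitriangular_order (p d : ℕ) (hp : p.Prime) (hd : 1 ≤ d)
    (R : Type*) [CommRing R] [Nontrivial R] [CharP R (p ^ d)]
    (n : ℕ) (hn : 1 ≤ n) (hnp : n ≤ p) :
    (∀ M : Matrix (Fin n) (Fin n) R,
      (∀ j, M j j = 1) → (∀ j k : Fin n, (k : ℕ) < (j : ℕ) → M j k = 0) →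
      M ^ p ^ d = 1) ∧
    (∀ (N : Matrix (Fin n) (Fin n) R) (k : ℕ), 1 ≤ k → k ≤ n - 1 →
      (∀ j j' : Fin n, (j' : ℕ) < (j : ℕ) + k → N j j' = 0) →
      (∃ j j' : Fin n, (j' : ℕ) = (j : ℕ) + k ∧ IsUnit (N j j')) →
      orderOf (1 + N) = p ^ d) := by
  constructor
  · intro M hdiag hlow
    have hM : M = 1 + (M - 1) := by abel
    rw [hM]
    apply key_pow_eq_one p d hp hd hnp
    intro j j' h
    rcases Nat.lt_or_ge (j' : ℕ) (j : ℕ) with h' | h'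
    · have hne : j ≠ j' := Fin.ne_of_val_ne (by omega)
      simp [hlow j j' h', Matrix.one_apply_ne hne]
    · have : j = j' := Fin.ext (by omega)
      subst this
      simp [hdiag j]
  · rintro N k hk1 hk2 hcodiag ⟨j, j', hj', hu⟩
    have hP1 : ∀ j j' : Fin n, (j' : ℕ) < (j : ℕ) + 1 → N j j' = 0 := fun a b h =>
      hcodiag a b (by omega)
    have hpow : (1 + N) ^ p ^ d = 1 := key_pow_eq_one p d hp hd hnp N hP1
    have hdvd : orderOf (1 + N) ∣ p ^ d := orderOf_dvd_of_pow_eq_one hpow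
    obtain ⟨e, he, hord⟩ := (Nat.dvd_prime_pow hp).mp hdvd
    rw [hord]
    congr 1
    by_contra hne
    have hed : e ≤ d - 1 := by omega
    have hpow' : (1 + N) ^ p ^ (d - 1) = 1 := by
      apply orderOf_dvd_iff_pow_eq_one.mp
      rw [hord]
      exact pow_dvd_pow p hed
    have hentry := entry_eval N k hk1 hcodiag j j' hj' (p ^ (d - 1))
      (Nat.one_le_iff_ne_zero.mpr (pow_ne_zero _ hp.pos.ne'))
    rw [hpow', Matrix.one_apply_ne (Fin.ne_of_val_ne (by omega))] at hentry
    rw [← Nat.cast_smul_eq_nsmul R, smul_eq_mul] at hentry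
    have hcast : ((p ^ (d - 1) : ℕ) : R) = 0 := by
      exact (hu.mul_left_eq_zero).mp hentry.symm
    have : p ^ d ∣ p ^ (d - 1) := (CharP.cast_eq_zero_iff R (p ^ d) _).mp hcast
    have := (Nat.pow_dvd_pow_iff_le_right hp.one_lt).mp this
    omega
end

section
/- Let p be a prime, let H be a finite elementary abelian p-group (a finite commutative group with h^p = 1 for all h ∈ H), let r ≥ 1, and let σ₁, …, σ_r be automorphisms of H. Let H* = H ⋊ F_r be the semidirect product of H with the free group F_r on generators t₁, …, t_r acting on H via t_i ↦ σ_i. Then H* is residually p if and only if the subgroup of Aut(H) generated by σ₁, …, σ_r is a p-group. -/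
open List Finset

section Magnus

variable (p r N : ℕ) [Fact p.Prime]

abbrev MB := {m : List (Fin r) // m.length ≤ N}

noncomputable instance : Fintype (MB r N) :=
  @Fintype.ofFinite _ ((List.finite_length_le (Fin r) N).to_subtype)

/-- basis matrices of the truncated free algebra -/
def TM (m : List (Fin r)) : Matrix (MB r N) (MB r N) (ZMod p) :=
  Matrix.of fun u v => if (u : List (Fin r)) = m ++ (v : List (Fin r)) then 1 else 0

lemma TM_nil : TM p r N [] = 1 := by
  ext u v
  simp [TM, Matrix.one_apply, Subtype.ext_iff]

lemma TM_eq_zero {m : List (Fin r)} (hm : N < m.length) : TM p r N m = 0 := by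
  ext u v
  simp only [TM, Matrix.of_apply, Matrix.zero_apply, ite_eq_right_iff]
  intro hc
  exfalso
  have := u.2
  rw [hc, List.length_append] at this
  omega

lemma TM_mul (m m' : List (Fin r)) :
    TM p r N m * TM p r N m' = TM p r N (m ++ m') := by
  ext u v
  rw [Matrix.mul_apply]
  by_cases h : (m' ++ (v : List (Fin r))).length ≤ N
  · rw [Finset.sum_eq_single (⟨m' ++ v.1, h⟩ : MB r N)]
    · simp [TM, List.append_assoc]
    · intro z _ hz
      simp only [TM, Matrix.of_apply]
      rw [if_neg (fun hc => hz (Subtype.ext hc)), mul_zero]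
    · exact fun h' => absurd (Finset.mem_univ _) h'
  · have h1 : TM p r N (m ++ m') u v = 0 := by
      simp only [TM, Matrix.of_apply]
      rw [if_neg]
      intro hc
      apply h
      have := u.2
      rw [hc] at this
      simp only [List.length_append] at this ⊢
      omega
    rw [h1]
    apply Finset.sum_eq_zero
    intro z _
    have hz : (z : List (Fin r)) ≠ m' ++ (v : List (Fin r)) := fun hc => h (hc ▸ z.2)
    simp [TM, hz]

lemma TM_pow (j : Fin r) (k : ℕ) :
    TM p r N [j] ^ k = TM p r N (List.replicate k j) := by
  induction k with
  | zero => rw [pow_zero, List.replicate_zero, TM_nil]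
  | succ k ih =>
    rw [pow_succ, ih, TM_mul, List.replicate_succ']

lemma nilMB_mem : ([] : List (Fin r)).length ≤ N := by simp

lemma TM_mul_apply (m : List (Fin r)) (X : Matrix (MB r N) (MB r N) (ZMod p))
    (u v : MB r N) :
    (TM p r N m * X) u v =
      if h : m <+: (u : List (Fin r)) then
        X ⟨(u : List (Fin r)).drop m.length,
            le_trans (by rw [List.length_drop]; omega) u.2⟩ v
      else 0 := by
  rw [Matrix.mul_apply]
  split_ifs with h
  · obtain ⟨t, ht⟩ := h
    have htlen : t.length ≤ N := by
      have := u.2; rw [← ht, List.length_append] at this; omega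
    have hdrop : (u : List (Fin r)).drop m.length = t := by
      rw [← ht, List.drop_left]
    rw [Finset.sum_eq_single (⟨t, htlen⟩ : MB r N)]
    · simp only [TM, Matrix.of_apply]
      rw [if_pos (by rw [← ht]), one_mul]
      congr 1
      exact Subtype.ext hdrop.symm
    · intro z _ hz
      simp only [TM, Matrix.of_apply]
      rw [if_neg, zero_mul]
      intro hc
      exact hz (Subtype.ext (List.append_cancel_left (by rw [← hc, ht])))
    · exact fun h' => absurd (Finset.mem_univ _) h'
  · rw [Finset.sum_eq_zero]
    intro z _
    simp only [TM, Matrix.of_apply]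
    rw [if_neg, zero_mul]
    exact fun hc => h ⟨z.1, hc.symm⟩

end Magnus
section Magnus2

variable (p r N : ℕ) [Fact p.Prime]

lemma matrix_one_add_pow (s : Matrix (MB r N) (MB r N) (ZMod p)) (n : ℕ) :
    (1 + s) ^ n = ∑ k ∈ Finset.range (n + 1), (n.choose k : ZMod p) • s ^ k := by
  rw [add_comm, (Commute.one_right s).add_pow]
  refine Finset.sum_congr rfl fun k _ => ?_
  rw [one_pow, mul_one, ← nsmul_eq_mul', ← Nat.cast_smul_eq_nsmul (ZMod p)]

lemma matrix_one_add_pow_p (hN : N + 1 ≤ p ^ N) (s : Matrix (MB r N) (MB r N) (ZMod p))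
    (hs : s ^ (N + 1) = 0) : (1 + s) ^ (p ^ N) = 1 := by
  rw [matrix_one_add_pow]
  rw [Finset.sum_eq_single 0]
  · simp
  · intro k _ hk
    rcases le_or_gt k N with h | h
    · have hd : (p : ℕ) ∣ (p ^ N).choose k :=
        Nat.Prime.dvd_choose_pow (Fact.out) hk (by omega)
      have : ((p ^ N).choose k : ZMod p) = 0 := (ZMod.natCast_eq_zero_iff _ _).mpr hd
      rw [this, zero_smul]
    · have : s ^ k = 0 := by
        have : s ^ k = s ^ (N + 1) * s ^ (k - (N + 1)) := by
          rw [← pow_add]; congr 1; omega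
        rw [this, hs, zero_mul]
      rw [this, smul_zero]
  · intro h; exact absurd (Finset.mem_range.mpr (by positivity)) h

/-- the span of basis matrices with word length at least `k` -/
def WS (k : ℕ) : Submodule (ZMod p) (Matrix (MB r N) (MB r N) (ZMod p)) :=
  Submodule.span (ZMod p) (TM p r N '' {m | k ≤ m.length})

lemma WS_antitone {i j : ℕ} (hij : i ≤ j) : WS p r N j ≤ WS p r N i :=
  Submodule.span_mono (Set.image_mono fun m hm => le_trans hij hm)

lemma WS_mul {i j : ℕ} {a b : Matrix (MB r N) (MB r N) (ZMod p)}
    (ha : a ∈ WS p r N i) (hb : b ∈ WS p r N j) : a * b ∈ WS p r N (i + j) := by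
  induction ha using Submodule.span_induction with
  | mem x hx =>
    obtain ⟨m, hm, rfl⟩ := hx
    induction hb using Submodule.span_induction with
    | mem y hy =>
      obtain ⟨m', hm', rfl⟩ := hy
      rw [TM_mul]
      exact Submodule.subset_span ⟨m ++ m', by
        simp only [Set.mem_setOf_eq, List.length_append]; exact Nat.add_le_add hm hm', rfl⟩
    | zero => rw [mul_zero]; exact zero_mem _
    | add y z _ _ hy hz => rw [mul_add]; exact add_mem hy hz
    | smul c y _ hy => rw [mul_smul_comm]; exact Submodule.smul_mem _ c hy
  | zero => rw [zero_mul]; exact zero_mem _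
  | add x y _ _ hx hy => rw [add_mul]; exact add_mem hx hy
  | smul c x _ hx => rw [smul_mul_assoc]; exact Submodule.smul_mem _ c hx

lemma WS_pow {s : Matrix (MB r N) (MB r N) (ZMod p)} (hs : s ∈ WS p r N 1) (n : ℕ) :
    s ^ n ∈ WS p r N n := by
  induction n with
  | zero =>
    rw [pow_zero, ← TM_nil p r N]
    exact Submodule.subset_span ⟨[], by simp, rfl⟩
  | succ n ih =>
    rw [pow_succ]
    exact WS_mul p r N ih hs

lemma WS_top_eq_zero {s : Matrix (MB r N) (MB r N) (ZMod p)} (hs : s ∈ WS p r N (N + 1)) :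
    s = 0 := by
  have : WS p r N (N + 1) ≤ ⊥ := by
    rw [WS, Submodule.span_le]
    rintro x ⟨m, hm, rfl⟩
    simp only [SetLike.mem_coe, Submodule.mem_bot]
    exact TM_eq_zero p r N (by simpa using hm)
  simpa using this hs

lemma matrix_pow_p_of_WS (hN : N + 1 ≤ p ^ N) {s : Matrix (MB r N) (MB r N) (ZMod p)}
    (hs : s ∈ WS p r N 1) : (1 + s) ^ (p ^ N) = 1 :=
  matrix_one_add_pow_p p r N hN s (WS_top_eq_zero p r N (WS_pow p r N hs (N + 1)))

end Magnus2
section RunsDesc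

variable {α : Type*} [DecidableEq α]

/-- number of descents (adjacent unequal pairs) -/
def desc : List α → ℕ
  | [] => 0
  | [_] => 0
  | a :: b :: t => (if a = b then 0 else 1) + desc (b :: t)

lemma desc_cons_cons_same (a : α) (t : List α) : desc (a :: a :: t) = desc (a :: t) := by
  simp [desc]

lemma desc_cons_le (a : α) (t : List α) : desc (a :: t) ≤ desc t + 1 := by
  cases t with
  | nil => simp [desc]
  | cons b t' =>
    rw [desc]
    split_ifs <;> omega

lemma desc_replicate (d : ℕ) (j : α) : desc (List.replicate d j) = 0 := by
  induction d with
  | zero => simp [desc]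
  | succ d ih =>
    cases d with
    | zero => simp [desc]
    | succ d' =>
      rw [List.replicate_succ, List.replicate_succ, desc_cons_cons_same, ← List.replicate_succ, ih]

lemma desc_replicate_append_le (d : ℕ) (j : α) (v : List α) :
    desc (List.replicate d j ++ v) ≤ desc v + 1 := by
  induction d with
  | zero => simpa using Nat.le_succ (desc v)
  | succ d ih =>
    cases d with
    | zero => simpa using desc_cons_le j v
    | succ d' =>
      rw [List.replicate_succ, List.cons_append, List.replicate_succ, List.cons_append,
        desc_cons_cons_same, ← List.cons_append, ← List.replicate_succ]
      exact ih

lemma desc_replicate_append (c : ℕ) (hc : 1 ≤ c) (j b : α) (t : List α) (hb : b ≠ j) :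
    desc (List.replicate c j ++ b :: t) = desc (b :: t) + 1 := by
  induction c with
  | zero => omega
  | succ c ih =>
    cases c with
    | zero =>
      simp only [List.replicate_succ, List.replicate_zero, List.cons_append, List.nil_append]
      rw [desc, if_neg (fun h => hb h.symm)]
      omega
    | succ c' =>
      rw [List.replicate_succ, List.cons_append, List.replicate_succ, List.cons_append,
        desc_cons_cons_same, ← List.cons_append, ← List.replicate_succ]
      exact ih (by omega)

/-- run-length encoding -/
def runs : List α → List (α × ℕ)
  | [] => []
  | a :: t =>
    match runs t with
    | [] => [(a, 1)]
    | (b, m) :: rt => if a = b then (b, m + 1) :: rt else (a, 1) :: (b, m) :: rt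

lemma runs_cons_of_nil {t : List α} (a : α) (hr : runs t = []) :
    runs (a :: t) = [(a, 1)] := by
  rw [runs, hr]

lemma runs_cons_of_cons {t : List α} (a b : α) (m : ℕ) (rt : List (α × ℕ))
    (hr : runs t = (b, m) :: rt) :
    runs (a :: t) = if a = b then (b, m + 1) :: rt else (a, 1) :: (b, m) :: rt := by
  rw [runs, hr]

lemma runs_eq_nil {t : List α} (h : runs t = []) : t = [] := by
  cases t with
  | nil => rfl
  | cons a t' =>
    exfalso
    rcases hr : runs t' with _ | ⟨⟨b, m⟩, rt⟩
    · rw [runs_cons_of_nil a hr] at h; simp at h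
    · rw [runs_cons_of_cons a b m rt hr] at h
      by_cases hab : a = b <;> simp [hab] at h

lemma runs_head : ∀ {t : List α} {x : α} {m : ℕ} {rt : List (α × ℕ)},
    runs t = (x, m) :: rt → ∃ t', t = x :: t' := by
  intro t x m rt h
  cases t with
  | nil => simp [runs] at h
  | cons a t' =>
    refine ⟨t', ?_⟩
    rcases hr : runs t' with _ | ⟨⟨b, k⟩, rt'⟩
    · rw [runs_cons_of_nil a hr] at h
      simp only [List.cons.injEq, Prod.mk.injEq] at h
      rw [h.1.1]
    · rw [runs_cons_of_cons a b k rt' hr] at h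
      by_cases hab : a = b
      · rw [if_pos hab] at h
        simp only [List.cons.injEq, Prod.mk.injEq] at h
        rw [hab, h.1.1]
      · rw [if_neg hab] at h
        simp only [List.cons.injEq, Prod.mk.injEq] at h
        rw [h.1.1]

lemma runs_pos : ∀ {t : List α} {x : α × ℕ}, x ∈ runs t → 1 ≤ x.2 := by
  intro t
  induction t with
  | nil => intro x h; simp [runs] at h
  | cons a t' ih =>
    intro x h
    rcases hr : runs t' with _ | ⟨⟨b, k⟩, rt'⟩
    · rw [runs_cons_of_nil a hr] at h
      rcases List.mem_singleton.mp h with rfl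
      simp
    · rw [runs_cons_of_cons a b k rt' hr] at h
      by_cases hab : a = b
      · rw [if_pos hab] at h
        rcases List.mem_cons.mp h with h | h
        · subst h; simp
        · exact ih (by rw [hr]; exact List.mem_cons_of_mem _ h)
      · rw [if_neg hab] at h
        rcases List.mem_cons.mp h with h | h
        · subst h; simp
        · exact ih (by rw [hr]; exact h)

lemma runs_chain' (R : α → α → Prop) : ∀ (L : List α), List.Chain' R L →
    List.Chain' (fun u v : α × ℕ => u.1 ≠ v.1 ∧ R u.1 v.1) (runs L) := by
  intro L
  induction L with
  | nil => intro _; simp [runs, List.Chain']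
  | cons a t ih =>
    intro hL
    have ht : List.Chain' R t := hL.tail
    rcases hr : runs t with _ | ⟨⟨b, m⟩, rt⟩
    · rw [runs_cons_of_nil a hr]; simp [List.Chain']
    · rw [runs_cons_of_cons a b m rt hr]
      have ihc := ih ht
      rw [hr] at ihc
      by_cases hab : a = b
      · rw [if_pos hab]
        unfold List.Chain' at ihc ⊢
        rw [List.isChain_cons] at ihc ⊢
        exact ⟨fun y hy => ihc.1 y hy, ihc.2⟩
      · rw [if_neg hab]
        obtain ⟨t', rfl⟩ := runs_head hr
        exact List.isChain_cons_cons.mpr ⟨⟨hab, (List.isChain_cons_cons.mp hL).1⟩, ihc⟩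

lemma runs_prod {M : Type*} [Monoid M] (g : α → M) : ∀ (L : List α),
    ((runs L).map fun x => g x.1 ^ x.2).prod = (L.map g).prod := by
  intro L
  induction L with
  | nil => simp [runs]
  | cons a t ih =>
    rcases hr : runs t with _ | ⟨⟨b, m⟩, rt⟩
    · rw [runs_cons_of_nil a hr, runs_eq_nil hr]
      simp
    · rw [runs_cons_of_cons a b m rt hr]
      rw [hr] at ih
      by_cases hab : a = b
      · rw [if_pos hab]
        simp only [List.map_cons, List.prod_cons] at ih ⊢
        rw [← ih, pow_succ', mul_assoc, hab]
      · rw [if_neg hab]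
        simp only [List.map_cons, List.prod_cons] at ih ⊢
        rw [← ih, pow_one]

lemma runs_join : ∀ L : List α, ((runs L).flatMap fun x => List.replicate x.2 x.1) = L := by
  intro L
  induction L with
  | nil => simp [runs]
  | cons a t ih =>
    rcases hr : runs t with _ | ⟨⟨b, m⟩, rt⟩
    · rw [runs_cons_of_nil a hr, runs_eq_nil hr]; simp
    · rw [runs_cons_of_cons a b m rt hr]
      rw [hr] at ih
      by_cases hab : a = b
      · rw [if_pos hab]
        simp only [List.flatMap_cons] at ih ⊢
        rw [List.replicate_succ, List.cons_append, ih, hab]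
      · rw [if_neg hab]
        simp only [List.flatMap_cons] at ih ⊢
        rw [ih]
        simp

lemma runs_length_sum (L : List α) : ((runs L).map Prod.snd).sum = L.length := by
  conv_rhs => rw [← runs_join L]
  rw [List.length_flatMap]
  congr 1
  simp

end RunsDesc
section Magnus3

variable (p r N : ℕ) [Fact p.Prime]

lemma entry_pow_mul (j : Fin r) (n : ℕ) (X : Matrix (MB r N) (MB r N) (ZMod p))
    (u v : MB r N) :
    ((1 + TM p r N [j]) ^ n * X) u v =
      ∑ d ∈ Finset.range (n + 1), (n.choose d : ZMod p) *
        (if h : List.replicate d j <+: (u : List (Fin r)) then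
          X ⟨(u : List (Fin r)).drop d,
              le_trans (by rw [List.length_drop]; omega) u.2⟩ v
        else 0) := by
  rw [matrix_one_add_pow, Finset.sum_mul, Matrix.sum_apply]
  refine Finset.sum_congr rfl fun d _ => ?_
  rw [TM_pow, smul_mul_assoc, Matrix.smul_apply, smul_eq_mul]
  congr 1
  rw [TM_mul_apply]
  simp only [List.length_replicate]

/-- `cExp n` is `p ^ (p-adic valuation of n)` -/
def cExp (n : ℕ) : ℕ := p ^ n.factorization p

lemma cExp_pos (n : ℕ) : 1 ≤ cExp p n := Nat.pow_pos (Fact.out : p.Prime).pos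

lemma cExp_le {n : ℕ} (hn : n ≠ 0) : cExp p n ≤ n :=
  Nat.le_of_dvd (Nat.pos_of_ne_zero hn) (Nat.ordProj_dvd n p)

/-- the monomial selected for a run list -/
def monom (RS : List (Fin r × ℕ)) : List (Fin r) :=
  RS.flatMap fun x => List.replicate (cExp p x.2) x.1

lemma monom_cons (x : Fin r × ℕ) (RS : List (Fin r × ℕ)) :
    monom p r (x :: RS) = List.replicate (cExp p x.2) x.1 ++ monom p r RS := by
  simp [monom]

lemma monom_head (x : Fin r × ℕ) (RS : List (Fin r × ℕ)) :
    ∃ t, monom p r (x :: RS) = x.1 :: t := by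
  rw [monom_cons]
  rcases Nat.exists_eq_add_of_le (cExp_pos p x.2) with ⟨c, hc⟩
  rw [Nat.add_comm] at hc
  rw [hc]
  exact ⟨List.replicate c x.1 ++ monom p r RS, by simp [List.replicate_succ]⟩

lemma desc_monom : ∀ (x : Fin r × ℕ) (RS : List (Fin r × ℕ)),
    List.Chain' (fun a b => a.1 ≠ b.1) (x :: RS) →
    desc (monom p r (x :: RS)) = RS.length := by
  intro x RS
  induction RS generalizing x with
  | nil =>
    intro _
    rw [monom_cons, show monom p r [] = [] from rfl, List.append_nil, desc_replicate,
      List.length_nil]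
  | cons y RS' ih =>
    intro hch
    obtain ⟨t, ht⟩ := monom_head p r y RS'
    rw [monom_cons, ht, desc_replicate_append _ (cExp_pos p x.2) _ _ _
      (fun h => ((List.isChain_cons_cons.mp hch).1 h.symm).elim), ← ht,
      ih y (List.isChain_cons_cons.mp hch).2]
    simp

/-- product of the run matrices -/
noncomputable def RProd (RS : List (Fin r × ℕ)) : Matrix (MB r N) (MB r N) (ZMod p) :=
  (RS.map fun x => (1 + TM p r N [x.1]) ^ x.2).prod

lemma RProd_cons (x : Fin r × ℕ) (RS : List (Fin r × ℕ)) :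
    RProd p r N (x :: RS) = (1 + TM p r N [x.1]) ^ x.2 * RProd p r N RS := by
  simp [RProd]

/-- vanishing lemma: entries at words with too many descents vanish -/
lemma RProd_entry_eq_zero : ∀ (RS : List (Fin r × ℕ)) (u : MB r N),
    (u : List (Fin r)) ≠ [] → RS.length ≤ desc (u : List (Fin r)) →
    RProd p r N RS u ⟨[], nilMB_mem r N⟩ = 0 := by
  intro RS
  induction RS with
  | nil =>
    intro u hu _
    rw [RProd]
    simp only [List.map_nil, List.prod_nil]
    exact Matrix.one_apply_ne (fun h => hu (congrArg Subtype.val h))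
  | cons x RS' ih =>
    intro u hu hdesc
    rw [RProd_cons, entry_pow_mul]
    apply Finset.sum_eq_zero
    intro d _
    rcases Classical.em (List.replicate d x.1 <+: (u : List (Fin r))) with h | h
    swap
    · rw [dif_neg h, mul_zero]
    rw [dif_pos h]
    obtain ⟨t, ht⟩ := h
    have hdrop : (u : List (Fin r)).drop d = t := by
      have := List.drop_left (l₁ := List.replicate d x.1) (l₂ := t)
      rw [List.length_replicate] at this
      rw [← ht, this]
    rcases Classical.em (t = []) with rfl | htne
    · exfalso
      have : desc (u : List (Fin r)) = 0 := by
        rw [← ht, List.append_nil, desc_replicate]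
      rw [this] at hdesc
      simp at hdesc
    · have h2 : RProd p r N RS' ⟨(u : List (Fin r)).drop d,
          le_trans (le_of_eq List.length_drop) (le_trans (Nat.sub_le _ _) u.2)⟩
          ⟨[], nilMB_mem r N⟩ = 0 := by
        apply ih
        · show (u : List (Fin r)).drop d ≠ []
          rw [hdrop]; exact htne
        · show RS'.length ≤ desc ((u : List (Fin r)).drop d)
          have h3 : desc (u : List (Fin r)) ≤ desc t + 1 := by
            rw [← ht]; exact desc_replicate_append_le d x.1 t
          rw [hdrop]
          simp only [List.length_cons] at hdesc
          omega
      rw [h2, mul_zero]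

/-- the key computation: the entry of the product at the selected monomial -/
lemma RProd_entry : ∀ (RS : List (Fin r × ℕ)),
    List.Chain' (fun a b => a.1 ≠ b.1) RS → (∀ x ∈ RS, x.2 ≠ 0) →
    ∀ (hlen : (monom p r RS).length ≤ N),
    RProd p r N RS ⟨monom p r RS, hlen⟩ ⟨[], nilMB_mem r N⟩ =
      (RS.map fun x => ((x.2.choose (cExp p x.2) : ZMod p))).prod := by
  intro RS
  induction RS with
  | nil =>
    intro _ _ hlen
    rw [RProd]
    simp only [List.map_nil, List.prod_nil]
    rw [show (⟨monom p r [], hlen⟩ : MB r N) = ⟨[], nilMB_mem r N⟩ from Subtype.ext rfl,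
      Matrix.one_apply_eq]
  | cons x RS' ih =>
    intro hch hx hlen
    have hxne : x.2 ≠ 0 := hx x (List.mem_cons_self)
    have hcle : cExp p x.2 ≤ x.2 := cExp_le p hxne
    have hmonlen : (monom p r (x :: RS')).length =
        cExp p x.2 + (monom p r RS').length := by
      rw [monom_cons, List.length_append, List.length_replicate]
    have hlen' : (monom p r RS').length ≤ N := by omega
    rw [RProd_cons, entry_pow_mul]
    rw [Finset.sum_eq_single_of_mem (cExp p x.2)
      (Finset.mem_range.mpr (by omega))]
    · have hpre : List.replicate (cExp p x.2) x.1 <+: monom p r (x :: RS') := by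
        rw [monom_cons]; exact List.prefix_append _ _
      rw [dif_pos hpre]
      have hdrop : (monom p r (x :: RS')).drop (cExp p x.2) = monom p r RS' := by
        rw [monom_cons]
        have := List.drop_left (l₁ := List.replicate (cExp p x.2) x.1) (l₂ := monom p r RS')
        rwa [List.length_replicate] at this
      have : (⟨(monom p r (x :: RS')).drop (cExp p x.2), by
          rw [List.length_drop]; omega⟩ : MB r N) = ⟨monom p r RS', hlen'⟩ :=
        Subtype.ext hdrop
      rw [this, ih (List.isChain_cons.mp hch).2 (fun y hy => hx y (List.mem_cons_of_mem _ hy)) hlen']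
      simp
    · intro d hd hdne
      rcases Classical.em (List.replicate d x.1 <+: monom p r (x :: RS')) with h | h
      swap
      · rw [dif_neg h, mul_zero]
      rw [dif_pos h]
      -- show d < cExp p x.2, i.e. prefix fails for larger d
      have hdlt : d < cExp p x.2 := by
        rcases Nat.lt_or_ge d (cExp p x.2) with h' | h'
        · exact h'
        · exfalso
          obtain ⟨t, ht⟩ := h
          rw [monom_cons] at ht
          have hrep : List.replicate d x.1 =
              List.replicate (cExp p x.2) x.1 ++ List.replicate (d - cExp p x.2) x.1 := by
            rw [← List.replicate_add]; congr 1; omega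
          rw [hrep, List.append_assoc] at ht
          have ht2 : List.replicate (d - cExp p x.2) x.1 ++ t = monom p r RS' :=
            List.append_cancel_left ht
          have hdc : d - cExp p x.2 ≠ 0 := by omega
          cases RS' with
          | nil =>
            apply hdc
            have : (List.replicate (d - cExp p x.2) x.1 ++ t).length = 0 := by
              rw [ht2, show monom p r [] = [] from rfl, List.length_nil]
            simp only [List.length_append, List.length_replicate] at this
            omega
          | cons y RS'' =>
            obtain ⟨t', ht'⟩ := monom_head p r y RS''
            rw [ht'] at ht2
            have : x.1 = y.1 := by
              rcases Nat.exists_eq_add_of_le (Nat.one_le_iff_ne_zero.mpr hdc) with ⟨c, hc⟩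
              rw [Nat.add_comm] at hc
              rw [hc] at ht2
              simp only [List.replicate_succ, List.cons_append] at ht2
              exact (List.cons_eq_cons.mp ht2).1
            exact (List.isChain_cons_cons.mp hch).1 this
      -- now cross terms vanish by the descent lemma
      obtain ⟨t, ht⟩ := h
      have hdrop : (monom p r (x :: RS')).drop d = t := by
        have := List.drop_left (l₁ := List.replicate d x.1) (l₂ := t)
        rw [List.length_replicate] at this
        rw [← ht, this]
      have ht' : t = List.replicate (cExp p x.2 - d) x.1 ++ monom p r RS' := by
        have hrep : List.replicate (cExp p x.2) x.1 =
            List.replicate d x.1 ++ List.replicate (cExp p x.2 - d) x.1 := by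
          rw [← List.replicate_add]; congr 1; omega
        rw [monom_cons, hrep, List.append_assoc] at ht
        exact List.append_cancel_left ht
      have h2 : RProd p r N RS' ⟨(monom p r (x :: RS')).drop d, by
          rw [List.length_drop]; omega⟩ ⟨[], nilMB_mem r N⟩ = 0 := by
        apply RProd_entry_eq_zero
        · show (monom p r (x :: RS')).drop d ≠ []
          rw [hdrop, ht']
          rcases Nat.exists_eq_add_of_le (Nat.one_le_iff_ne_zero.mpr
            (show cExp p x.2 - d ≠ 0 by omega)) with ⟨c, hc⟩
          rw [Nat.add_comm] at hc
          rw [hc, List.replicate_succ]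
          simp
        · show RS'.length ≤ desc ((monom p r (x :: RS')).drop d)
          rw [hdrop, ht']
          cases RS' with
          | nil =>
            rw [show monom p r [] = [] from rfl, List.append_nil, desc_replicate,
              List.length_nil]
          | cons y RS'' =>
            obtain ⟨t', ht''⟩ := monom_head p r y RS''
            rw [ht'', desc_replicate_append _ (by omega) _ _ _
              (fun hh => ((List.isChain_cons_cons.mp hch).1 hh.symm).elim), ← ht'',
              desc_monom p r y RS'' (List.isChain_cons_cons.mp hch).2]
            simp
      rw [h2, mul_zero]

end Magnus3
section LucasPart

variable {p : ℕ} [Fact p.Prime]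

lemma choose_pow_cast (a : ℕ) : ∀ n : ℕ,
    ((n.choose (p ^ a) : ZMod p)) = ((n / p ^ a : ℕ) : ZMod p) := by
  induction a with
  | zero => intro n; simp
  | succ a ih =>
    intro n
    have hl := (ZMod.intCast_eq_intCast_iff _ _ _).mpr
      (Choose.choose_modEq_choose_mod_mul_choose_div (p := p) (n := n) (k := p ^ (a + 1)))
    push_cast at hl
    have h1 : p ^ (a + 1) % p = 0 := by
      rw [pow_succ']
      exact Nat.mul_mod_right p _
    have h2 : p ^ (a + 1) / p = p ^ a := by
      rw [pow_succ, Nat.mul_div_cancel _ (Fact.out : p.Prime).pos]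
    rw [h1, h2] at hl
    simp only [Nat.choose_zero_right, Nat.cast_one, one_mul] at hl
    rw [hl, ih (n / p), Nat.div_div_eq_div_mul, ← pow_succ']

lemma choose_cExp_ne_zero {n : ℕ} (hn : n ≠ 0) :
    ((n.choose (cExp p n) : ZMod p)) ≠ 0 := by
  rw [cExp, choose_pow_cast]
  intro h
  rw [ZMod.natCast_eq_zero_iff] at h
  exact Nat.not_dvd_ordCompl (Fact.out : p.Prime) hn h

lemma cExp_mul_of_not_dvd {e m : ℕ} (he : e ≠ 0) (hpe : ¬ p ∣ e) (hm : m ≠ 0) :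
    cExp p (e * m) = cExp p m := by
  rw [cExp, cExp, Nat.factorization_mul he hm]
  simp only [Finsupp.coe_add, Pi.add_apply]
  rw [Nat.factorization_eq_zero_of_not_dvd hpe, zero_add]

end LucasPart

section ReducedChain

variable {α : Type*} [DecidableEq α]

/-- a reduced word has no adjacent cancelling pair -/
lemma chain'_of_reduced : ∀ (L : List (α × Bool)), FreeGroup.reduce L = L →
    List.Chain' (fun a b : α × Bool => a.1 = b.1 → a.2 = b.2) L := by
  intro L
  induction L with
  | nil => intro _; simp [List.Chain']
  | cons x L' ih =>
    intro hL
    rw [FreeGroup.reduce.cons] at hL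
    rcases hr : FreeGroup.reduce L' with _ | ⟨y, t⟩
    · rw [hr] at hL
      simp only at hL
      have : L' = [] := by
        have h := congrArg List.length hL
        simp only [List.length_cons, List.length_nil] at h
        exact List.length_eq_zero_iff.mp (by omega)
      subst this
      simp [List.Chain']
    · rw [hr] at hL
      simp only at hL
      by_cases hc : x.1 = y.1 ∧ x.2 = !y.2
      · exfalso
        rw [if_pos hc] at hL
        have h1 : L'.length + 1 ≤ t.length := by rw [hL]; simp
        have h2 : (FreeGroup.reduce L').length ≤ L'.length :=
          FreeGroup.Red.length_le (FreeGroup.reduce.red)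
        rw [hr] at h2
        simp only [List.length_cons] at h2
        omega
      · rw [if_neg hc] at hL
        have hL' : L' = y :: t := by
          have h := congrArg List.tail hL
          simp only [List.tail_cons] at h
          exact h.symm
        have hred : FreeGroup.reduce L' = L' := by rw [hr, hL']
        have ihc := ih hred
        rw [hL']
        refine List.isChain_cons_cons.mpr ⟨?_, by rw [← hL']; exact ihc⟩
        intro hxy
        by_contra hne
        exact hc ⟨hxy, by
          cases hx2 : x.2 <;> cases hy2 : y.2 <;> simp_all⟩

end ReducedChain
section FreeResP

variable (p : ℕ) [Fact p.Prime]

theorem freeGroup_exists_pgroup_hom {r : ℕ} (w : FreeGroup (Fin r)) (hw : w ≠ 1) :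
    ∃ Γ : Subgroup ((Matrix (MB r w.toWord.length) (MB r w.toWord.length) (ZMod p))ˣ),
      IsPGroup p Γ ∧ ∃ χ : FreeGroup (Fin r) →* Γ, χ w ≠ 1 := by
  have hp : p.Prime := Fact.out
  set l : List (Fin r × Bool) := w.toWord with hl
  set N : ℕ := l.length with hN
  have hlne : l ≠ [] := fun h => hw (FreeGroup.toWord_eq_nil_iff.mp h)
  have hN1 : 1 ≤ N := by
    rw [hN]
    exact List.length_pos_iff.mpr hlne
  have hNp : N + 1 ≤ p ^ N := Nat.lt_pow_self hp.one_lt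
  have hppos : 1 ≤ p ^ N := Nat.one_le_pow _ _ hp.pos
  -- the unit 1 + x_j
  have hUnit : ∀ j : Fin r, IsUnit (1 + TM p r N [j]) := by
    intro j
    refine IsNilpotent.isUnit_one_add ⟨N + 1, ?_⟩
    rw [TM_pow]
    exact TM_eq_zero p r N (by simp)
  let U : Fin r → (Matrix (MB r N) (MB r N) (ZMod p))ˣ := fun j => (hUnit j).unit
  have hUval : ∀ j, (U j : Matrix (MB r N) (MB r N) (ZMod p)) = 1 + TM p r N [j] :=
    fun j => (hUnit j).unit_spec
  -- membership of group elements in 1 + W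
  let Φ : (Matrix (MB r N) (MB r N) (ZMod p))ˣ → Prop :=
    fun x => (x : Matrix (MB r N) (MB r N) (ZMod p)) - 1 ∈ WS p r N 1
  have hUmem : ∀ j, Φ (U j) := by
    intro j
    show (U j : Matrix (MB r N) (MB r N) (ZMod p)) - 1 ∈ WS p r N 1
    rw [hUval, add_sub_cancel_left]
    exact Submodule.subset_span ⟨[j], by simp, rfl⟩
  have hone : Φ 1 := by
    show ((1 : (Matrix (MB r N) (MB r N) (ZMod p))ˣ) : Matrix (MB r N) (MB r N) (ZMod p))
      - 1 ∈ WS p r N 1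
    simp only [Units.val_one, sub_self]
    exact zero_mem _
  have hmul : ∀ x y : (Matrix (MB r N) (MB r N) (ZMod p))ˣ, Φ x → Φ y → Φ (x * y) := by
    intro x y hx hy
    show ((x * y : (Matrix (MB r N) (MB r N) (ZMod p))ˣ) : Matrix (MB r N) (MB r N) (ZMod p))
      - 1 ∈ WS p r N 1
    have hid : ((x * y : (Matrix (MB r N) (MB r N) (ZMod p))ˣ) :
        Matrix (MB r N) (MB r N) (ZMod p)) - 1 =
        ((x : Matrix (MB r N) (MB r N) (ZMod p)) - 1) *
          ((y : Matrix (MB r N) (MB r N) (ZMod p)) - 1) +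
        (((x : Matrix (MB r N) (MB r N) (ZMod p)) - 1) +
          ((y : Matrix (MB r N) (MB r N) (ZMod p)) - 1)) := by
      rw [Units.val_mul]; noncomm_ring
    rw [hid]
    exact add_mem (WS_antitone p r N (by omega) (WS_mul p r N hx hy)) (add_mem hx hy)
  have hpow : ∀ x : (Matrix (MB r N) (MB r N) (ZMod p))ˣ, Φ x → ∀ n : ℕ, Φ (x ^ n) := by
    intro x hx n
    induction n with
    | zero => rw [pow_zero]; exact hone
    | succ n ih => rw [pow_succ]; exact hmul _ _ ih hx
  have horder : ∀ x : (Matrix (MB r N) (MB r N) (ZMod p))ˣ, Φ x → x ^ (p ^ N) = 1 := by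
    intro x hx
    refine Units.ext ?_
    rw [Units.val_pow_eq_pow_val, Units.val_one]
    have hxx : (x : Matrix (MB r N) (MB r N) (ZMod p)) =
        1 + ((x : Matrix (MB r N) (MB r N) (ZMod p)) - 1) := by noncomm_ring
    rw [hxx]
    exact matrix_pow_p_of_WS p r N hNp hx
  have hinvpow : ∀ x : (Matrix (MB r N) (MB r N) (ZMod p))ˣ, x ^ (p ^ N) = 1 →
      x⁻¹ = x ^ (p ^ N - 1) := by
    intro x hx
    refine inv_eq_of_mul_eq_one_right ?_
    rw [← pow_succ']
    have h9 : p ^ N - 1 + 1 = p ^ N := by omega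
    rw [h9, hx]
  have hinv : ∀ x : (Matrix (MB r N) (MB r N) (ZMod p))ˣ, Φ x → Φ x⁻¹ := by
    intro x hx
    rw [hinvpow x (horder x hx)]
    exact hpow x hx _
  -- the p-group
  refine ⟨Subgroup.closure (Set.range U), ?_, ?_⟩
  · have hmemW : ∀ x ∈ Subgroup.closure (Set.range U), Φ x := by
      intro x hx
      induction hx using Subgroup.closure_induction with
      | mem y hy => obtain ⟨j, rfl⟩ := hy; exact hUmem j
      | one => exact hone
      | mul y z _ _ hy hz => exact hmul y z hy hz
      | inv y _ hy => exact hinv y hy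
    intro x
    refine ⟨N, ?_⟩
    have h10 := horder x.1 (hmemW x.1 x.2)
    refine Subtype.ext ?_
    rw [SubmonoidClass.coe_pow, OneMemClass.coe_one, h10]
  · -- the homomorphism
    let χ : FreeGroup (Fin r) →* (Matrix (MB r N) (MB r N) (ZMod p))ˣ := FreeGroup.lift U
    let χ' : FreeGroup (Fin r) →* (Subgroup.closure (Set.range U)) :=
      FreeGroup.lift fun j => ⟨U j, Subgroup.subset_closure ⟨j, rfl⟩⟩
    refine ⟨χ', ?_⟩
    have hcomp : ∀ v : FreeGroup (Fin r),
        ((Subgroup.closure (Set.range U)).subtype) (χ' v) = χ v := by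
      intro v
      have : ((Subgroup.closure (Set.range U)).subtype).comp χ' = χ := by
        apply FreeGroup.ext_hom
        intro a
        simp [χ, χ']
      rw [← this]; rfl
    intro hone'
    -- from χ' w = 1 we get χ w = 1; derive a contradiction
    have hχw : χ w = 1 := by
      rw [← hcomp w, hone', map_one]
    -- compute the matrix of χ w
    have hUorder : ∀ j, U j ^ (p ^ N) = 1 := fun j => horder _ (hUmem j)
    set e : Bool → ℕ := fun b => cond b 1 (p ^ N - 1) with he
    have hcond : ∀ x : Fin r × Bool, (cond x.2 (U x.1) (U x.1)⁻¹) = U x.1 ^ (e x.2) := by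
      rintro ⟨j, b⟩
      cases b
      · simp only [cond_false, he]
        rw [hinvpow _ (hUorder j)]
      · simp [he]
    have hχw_prod : χ w = (l.map fun x => U x.1 ^ e x.2).prod := by
      conv_lhs => rw [← FreeGroup.mk_toWord (x := w)]
      rw [show FreeGroup.mk w.toWord = FreeGroup.mk l from rfl]
      rw [FreeGroup.lift_mk]
      congr 1
      exact List.map_congr_left fun x _ => hcond x
    -- matrix level
    have hmat : ((χ w : (Matrix (MB r N) (MB r N) (ZMod p))ˣ) :
        Matrix (MB r N) (MB r N) (ZMod p)) =
        (l.map fun x => (1 + TM p r N [x.1]) ^ e x.2).prod := by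
      rw [hχw_prod]
      have h11 := map_list_prod (Units.coeHom (Matrix (MB r N) (MB r N) (ZMod p)))
        (List.map (fun x => U x.1 ^ e x.2) l)
      simp only [Units.coeHom_apply] at h11
      rw [h11, List.map_map]
      congr 1
    -- run decomposition
    set RS : List (Fin r × ℕ) := (runs l).map (fun x => (x.1.1, e x.1.2 * x.2)) with hRS
    have hprod_runs : (l.map fun x => (1 + TM p r N [x.1]) ^ e x.2).prod = RProd p r N RS := by
      rw [← runs_prod (fun x : Fin r × Bool => (1 + TM p r N [x.1]) ^ e x.2) l]
      rw [RProd, hRS, List.map_map]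
      congr 1
      refine List.map_congr_left fun x _ => ?_
      simp only [Function.comp_apply]
      rw [pow_mul]
    have hene : ∀ b, e b ≠ 0 := by
      intro b; cases b <;> simp [he] <;> omega
    have hpnd : ∀ b, ¬ p ∣ e b := by
      intro b hd
      cases b
      · simp only [he, cond_false] at hd
        have h1 : p ∣ p ^ N := dvd_pow_self p (by omega)
        have h2 := Nat.dvd_sub h1 hd
        rw [Nat.sub_sub_self hppos] at h2
        exact hp.ne_one (Nat.dvd_one.mp h2)
      · simp only [he, cond_true] at hd
        exact hp.ne_one (Nat.dvd_one.mp hd)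
    -- chain condition on RS
    have hchl : List.Chain' (fun a b : (Fin r × Bool) => a.1 = b.1 → a.2 = b.2) l :=
      chain'_of_reduced l (FreeGroup.reduce_toWord w)
    have hchruns := runs_chain' (fun a b : (Fin r × Bool) => a.1 = b.1 → a.2 = b.2) l hchl
    have hch : List.Chain' (fun a b : Fin r × ℕ => a.1 ≠ b.1) RS := by
      rw [hRS]
      refine (List.isChain_map _).mpr ?_
      refine List.IsChain.imp ?_ hchruns
      rintro ⟨⟨ja, ba⟩, ma⟩ ⟨⟨jb, bb⟩, mb⟩ ⟨hne, himp⟩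
      intro hj
      exact hne (Prod.ext hj (himp hj))
    have hxne : ∀ x ∈ RS, x.2 ≠ 0 := by
      rintro ⟨j, n⟩ hx
      rw [hRS] at hx
      obtain ⟨y, hy, hyeq⟩ := List.mem_map.mp hx
      have h1 := runs_pos hy
      have h2 := congrArg Prod.snd hyeq
      simp only at h2
      rw [← h2]
      exact Nat.mul_ne_zero (hene y.1.2) (by omega)
    have hlenm : (monom p r RS).length ≤ N := by
      have h1 : (monom p r RS).length
          = ((runs l).map (fun x : (Fin r × Bool) × ℕ => cExp p (e x.1.2 * x.2))).sum := by
        rw [monom, List.length_flatMap, hRS, List.map_map]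
        congr 1
        refine List.map_congr_left fun x _ => ?_
        simp [Function.comp]
      have h2 : ((runs l).map (fun x : (Fin r × Bool) × ℕ => cExp p (e x.1.2 * x.2))).sum
          ≤ ((runs l).map Prod.snd).sum := by
        apply List.sum_le_sum
        intro x hx
        have hm := runs_pos hx
        rw [cExp_mul_of_not_dvd (hene x.1.2) (hpnd x.1.2) (by omega)]
        exact cExp_le p (by omega)
      rw [h1]
      calc _ ≤ ((runs l).map Prod.snd).sum := h2
        _ = l.length := runs_length_sum l
    obtain ⟨y, RS', hRSeq⟩ : ∃ y RS', RS = y :: RS' := by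
      cases hRS0 : RS with
      | nil =>
        exfalso
        rw [hRS] at hRS0
        have : runs l = [] := List.map_eq_nil_iff.mp hRS0
        exact hlne (runs_eq_nil this)
      | cons y RS' => exact ⟨y, RS', rfl⟩
    have hmonne : monom p r RS ≠ [] := by
      rw [hRSeq]
      obtain ⟨t0, ht0⟩ := monom_head p r y RS'
      rw [ht0]
      simp
    have hentry := RProd_entry p r N RS hch hxne hlenm
    have hmat1 : RProd p r N RS ⟨monom p r RS, hlenm⟩ ⟨[], nilMB_mem r N⟩ = 0 := by
      rw [← hprod_runs, ← hmat, hχw]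
      simp only [Units.val_one]
      exact Matrix.one_apply_ne (fun hc => hmonne (congrArg Subtype.val hc))
    rw [hentry] at hmat1
    refine List.prod_ne_zero ?_ hmat1
    intro h0
    obtain ⟨x, hxmem, hx0⟩ := List.mem_map.mp h0
    exact choose_cExp_ne_zero (hxne x hxmem) hx0

end FreeResP
section MainHelpers

/-- kernel trick: a hom to a finite p-group gives a normal subgroup of p-power index -/
lemma exists_normal_of_hom {G P : Type*} [Group G] [Group P] [Finite P]
    (p : ℕ) (hp : p.Prime) (hP : IsPGroup p P) (ψ : G →* P) (g : G) (hg : ψ g ≠ 1) :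
    ∃ Nn : Subgroup G, Nn.Normal ∧ (∃ k : ℕ, Nn.index = p ^ k) ∧ g ∉ Nn := by
  haveI : Fact p.Prime := ⟨hp⟩
  refine ⟨ψ.ker, MonoidHom.normal_ker ψ, ?_, fun hmem => hg hmem⟩
  obtain ⟨n, hn⟩ := IsPGroup.iff_card.mp hP
  have hdvd : Nat.card ψ.range ∣ p ^ n := hn ▸ Subgroup.card_subgroup_dvd_card ψ.range
  obtain ⟨k, _, hk⟩ := (Nat.dvd_prime_pow hp).mp hdvd
  exact ⟨k, by rw [Subgroup.index_ker, hk]⟩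

end MainHelpers

/-- Let `H` be a finite elementary abelian `p`-group and `σ₁, …, σ_r`
automorphisms of `H`. The mapping torus `H ⋊ F_r` (with the free group `F_r`
acting via `t_i ↦ σ_i`) is residually `p` if and only if the subgroup of `Aut(H)`
generated by `σ₁, …, σ_r` is a `p`-group. -/
theorem elementaryAbelian_mappingTorus_residually_p_iff (p : ℕ) (hp : p.Prime)
    (H : Type*) [CommGroup H] [Finite H] (helem : ∀ h : H, h ^ p = 1)
    (r : ℕ) (hr : 1 ≤ r) (σ : Fin r → MulAut H) :
    IsResiduallyP p (SemidirectProduct H (FreeGroup (Fin r)) (FreeGroup.lift σ)) ↔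
      ∃ k : ℕ, Nat.card ↥(Subgroup.closure (Set.range σ)) = p ^ k := by
  haveI : Fact p.Prime := ⟨hp⟩
  haveI : Finite (MulAut H) := Finite.of_injective
    (fun e => (e : H → H)) (fun a b hab => by
      ext x
      exact congrFun hab x)
  constructor
  · -- residually p implies the closure is a p-group
    intro hres
    refine IsPGroup.iff_card.mp ?_
    intro τ
    by_contra hτ
    push_neg at hτ
    -- find a prime q ≠ p dividing the order of the group
    obtain ⟨q, hq, hqd, hqp⟩ : ∃ q, q.Prime ∧ q ∣ orderOf τ ∧ q ≠ p := by
      by_contra hcon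
      push_neg at hcon
      have ho : orderOf τ ≠ 0 := (orderOf_pos τ).ne'
      have := Nat.eq_prime_pow_of_unique_prime_dvd ho
        (fun {d} hd hdvd => hcon d hd hdvd)
      exact hτ _ (this ▸ pow_orderOf_eq_one τ)
    haveI : Fact q.Prime := ⟨hq⟩
    haveI := Fintype.ofFinite ↥(Subgroup.closure (Set.range σ))
    have hqcard : q ∣ Fintype.card ↥(Subgroup.closure (Set.range σ)) := by
      rw [← Nat.card_eq_fintype_card]
      exact hqd.trans (orderOf_dvd_natCard τ)
    obtain ⟨τ', hτ'⟩ := exists_prime_orderOf_dvd_card q hqcard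
    have hτ'ne : τ' ≠ 1 := by
      intro h
      rw [h, orderOf_one] at hτ'
      exact hq.one_lt.ne' hτ'.symm
    -- get an element moved by τ'
    obtain ⟨h0, hh0⟩ : ∃ h0 : H, (τ' : MulAut H) h0 ≠ h0 := by
      by_contra hfix
      push_neg at hfix
      apply hτ'ne
      refine Subtype.ext ?_
      ext x
      exact hfix x
    -- get a word mapping to τ'
    have hrange : (τ' : MulAut H) ∈ (FreeGroup.lift σ).range := by
      rw [FreeGroup.range_lift_eq_closure]
      exact τ'.2
    obtain ⟨v, hv⟩ := hrange
    -- the nontrivial commutator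
    set g : SemidirectProduct H (FreeGroup (Fin r)) (FreeGroup.lift σ) :=
      SemidirectProduct.inl h0 * SemidirectProduct.inr v *
        (SemidirectProduct.inl h0)⁻¹ * (SemidirectProduct.inr v)⁻¹ with hg
    have hgl : g = SemidirectProduct.inl (h0 * (((τ' : MulAut H)) h0)⁻¹) := by
      have h1 : SemidirectProduct.inr (φ := FreeGroup.lift σ) v *
          (SemidirectProduct.inl h0⁻¹ * SemidirectProduct.inr v⁻¹) =
          SemidirectProduct.inl ((((FreeGroup.lift σ) v) h0)⁻¹) := by
        rw [← mul_assoc, ← SemidirectProduct.inl_aut (φ := FreeGroup.lift σ) v h0⁻¹, map_inv]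
      rw [hg, ← map_inv (SemidirectProduct.inl (φ := FreeGroup.lift σ)) h0,
        ← map_inv (SemidirectProduct.inr (φ := FreeGroup.lift σ)) v,
        mul_assoc, mul_assoc, h1, ← map_mul, hv]
    have hgne : g ≠ 1 := by
      rw [hgl]
      intro hone
      have := SemidirectProduct.inl_injective
        (hone.trans (map_one (SemidirectProduct.inl (φ := FreeGroup.lift σ))).symm)
      rw [mul_inv_eq_one] at this
      exact hh0 this.symm
    obtain ⟨Nn, hNnorm, ⟨k, hk⟩, hgN⟩ := hres g hgne
    haveI := hNnorm
    set π := QuotientGroup.mk' Nn with hπ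
    have hcard : Nat.card (SemidirectProduct H (FreeGroup (Fin r)) (FreeGroup.lift σ) ⧸ Nn)
        = p ^ k := by rw [← Subgroup.index_eq_card, hk]
    haveI : Finite (SemidirectProduct H (FreeGroup (Fin r)) (FreeGroup.lift σ) ⧸ Nn) :=
      Nat.finite_of_card_ne_zero (by rw [hcard]; exact pow_ne_zero k hp.pos.ne')
    set a := π (SemidirectProduct.inl h0) with ha
    set b := π (SemidirectProduct.inr v) with hb
    have hbp : b ^ (p ^ k) = 1 := by
      rw [← hcard]
      exact pow_card_eq_one'
    -- b^q commutes with a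
    have hconj : SemidirectProduct.inr (v ^ q) * SemidirectProduct.inl h0 *
        (SemidirectProduct.inr (φ := FreeGroup.lift σ) (v ^ q))⁻¹ =
        SemidirectProduct.inl h0 := by
      rw [← map_inv (SemidirectProduct.inr (φ := FreeGroup.lift σ)) (v ^ q),
        ← SemidirectProduct.inl_aut (φ := FreeGroup.lift σ) (v ^ q) h0]
      congr 1
      rw [map_pow, hv]
      have : (τ' : MulAut H) ^ q = 1 := by
        have h1 : τ' ^ q = 1 := by rw [← hτ']; exact pow_orderOf_eq_one τ'
        exact_mod_cast congrArg Subtype.val h1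
      rw [this]
      rfl
    have hcomm : Commute (b ^ q) a := by
      have h5 : b ^ q * a * (b ^ q)⁻¹ = a := by
        rw [ha, hb, ← map_pow, ← map_inv, ← map_mul, ← map_mul,
          ← map_pow (SemidirectProduct.inr (φ := FreeGroup.lift σ)) v q, hconj]
      have := mul_inv_eq_iff_eq_mul.mp h5
      exact this
    -- Bezout
    have hqco : Nat.Coprime q (p ^ k) :=
      Nat.Coprime.pow_right k ((Nat.coprime_primes hq hp).mpr hqp)
    have hbez : (1 : ℤ) = q * Int.gcdA q (p ^ k) + (p ^ k : ℕ) * Int.gcdB q (p ^ k) := by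
      have h6 := Int.gcd_eq_gcd_ab (q : ℤ) ((p ^ k : ℕ) : ℤ)
      rw [Int.gcd_natCast_natCast, hqco.gcd_eq_one] at h6
      exact_mod_cast h6
    have hbeq : b = (b ^ q) ^ Int.gcdA q (p ^ k) := by
      conv_lhs => rw [← zpow_one b, hbez]
      rw [zpow_add, zpow_mul, zpow_mul]
      rw [zpow_natCast b, zpow_natCast b, hbp, one_zpow, mul_one]
    have hcommab : Commute a b := by
      rw [hbeq]
      exact (hcomm.zpow_left _).symm
    have hπg : π g = 1 := by
      have h7 : π g = a * b * a⁻¹ * b⁻¹ := by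
        rw [hg, map_mul, map_mul, map_mul, map_inv, map_inv, ← ha, ← hb]
      rw [h7, hcommab.eq, mul_assoc, mul_assoc, mul_inv_cancel_left, mul_inv_cancel]
    exact hgN ((QuotientGroup.eq_one_iff g).mp hπg)
  · -- converse: the closure being a p-group implies residually p
    rintro ⟨k, hk⟩ g hg
    by_cases hright : g.right = 1
    · -- left part nontrivial: use H ⋊ Q
      have hleft : g.left ≠ 1 := by
        intro h
        apply hg
        ext
        · exact h
        · exact hright
      set Q := Subgroup.closure (Set.range σ) with hQ
      set θ : FreeGroup (Fin r) →* Q :=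
        FreeGroup.lift (fun i => (⟨σ i, Subgroup.subset_closure (Set.mem_range_self i)⟩ : Q))
        with hθ
      have hθv : ∀ v : FreeGroup (Fin r), Q.subtype (θ v) = FreeGroup.lift σ v := by
        intro v
        have hco : Q.subtype.comp θ = FreeGroup.lift σ := by
          apply FreeGroup.ext_hom
          intro i
          simp [hθ]
        rw [← hco]
        rfl
      have hcompat : ∀ v : FreeGroup (Fin r),
          (SemidirectProduct.inl (φ := Q.subtype)).comp ((FreeGroup.lift σ v)).toMonoidHom =
          (MulAut.conj ((SemidirectProduct.inr.comp θ) v)).toMonoidHom.comp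
            (SemidirectProduct.inl (φ := Q.subtype)) := by
        intro v
        ext x
        · simp only [MonoidHom.comp_apply, MulEquiv.coe_toMonoidHom, MulAut.conj_apply]
          rw [← map_inv (SemidirectProduct.inr (φ := Q.subtype)) (θ v),
            ← SemidirectProduct.inl_aut (φ := Q.subtype) (θ v) x, hθv v]
        · simp
      set ψ : SemidirectProduct H (FreeGroup (Fin r)) (FreeGroup.lift σ) →*
          SemidirectProduct H Q Q.subtype :=
        SemidirectProduct.lift SemidirectProduct.inl (SemidirectProduct.inr.comp θ) hcompat
        with hψ
      -- the target is a finite p-group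
      have hEq : SemidirectProduct H Q Q.subtype ≃ H × Q :=
        ⟨fun x => (x.left, x.right), fun x => ⟨x.1, x.2⟩,
          fun x => by cases x; rfl, fun x => rfl⟩
      haveI : Finite (SemidirectProduct H Q Q.subtype) := Finite.of_equiv _ hEq.symm
      have hPH : IsPGroup p H := fun h => ⟨1, by rw [pow_one]; exact helem h⟩
      obtain ⟨m, hm⟩ := IsPGroup.iff_card.mp hPH
      have hPQ : IsPGroup p (SemidirectProduct H Q Q.subtype) := by
        refine IsPGroup.iff_card.mpr ⟨m + k, ?_⟩
        rw [Nat.card_congr hEq, Nat.card_prod, hm, hk, pow_add]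
      have hψg : ψ g ≠ 1 := by
        have hgeq : g = SemidirectProduct.inl g.left := by
          conv_lhs => rw [← SemidirectProduct.inl_left_mul_inr_right g]
          rw [hright, map_one, mul_one]
        rw [hgeq, hψ, SemidirectProduct.lift_inl]
        intro hone
        exact hleft (SemidirectProduct.inl_injective
          (hone.trans (map_one (SemidirectProduct.inl (φ := Q.subtype))).symm))
      exact exists_normal_of_hom p hp hPQ ψ g hψg
    · -- right part nontrivial: use the free group machinery
      obtain ⟨Γ, hΓp, χ', hχ'⟩ := freeGroup_exists_pgroup_hom p g.right hright
      set ψ := χ'.comp (SemidirectProduct.rightHom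
        (φ := FreeGroup.lift σ)) with hψ
      have hψg : ψ g ≠ 1 := by
        rw [hψ, MonoidHom.comp_apply, SemidirectProduct.rightHom_eq_right]
        exact hχ'
      exact exists_normal_of_hom p hp hΓp ψ g hψg
end
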